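/- Let {|a_i⟩}_{i=1}^N and {|b_j⟩}_{j=1}^N be two orthonormal bases of ℂ^N with overlap c = max_{i,j} |⟨b_j|a_i⟩|, and let ρ be a density operator on ℂ^N. Then for any two entropic functional pairs (h_A,φ_A) and (h_B,φ_B), H_{(h_A,φ_A)}(p(A,ρ)) + H_{(h_B,φ_B)}(p(B,ρ)) ≥ min_{θ ∈ [0, γ]} ( D_{(h_A,φ_A)}(θ) + D_{(h_B,φ_B)}(γ − θ) ), where γ = arccos c. -/

import Mathlib

open scoped BigOperators ComplexOrder

noncomputable section

/-- An entropic functional pair `(h, φ)` in the sense of Salicrú. -/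
structure EntropicPair where
  phi : ℝ → ℝ
  h : ℝ → ℝ
  phi_cont : ContinuousOn phi (Set.Icc 0 1)
  h_cont : Continuous h
  phi_zero : phi 0 = 0
  norm_zero : h (phi 1) = 0
  admissible : (StrictConcaveOn ℝ (Set.Icc (0:ℝ) 1) phi ∧ StrictMono h) ∨
               (StrictConvexOn ℝ (Set.Icc (0:ℝ) 1) phi ∧ StrictAnti h)

/-- The Salicrú `(h,φ)`-entropy of a probability vector. -/
noncomputable def EntropicPair.H (e : EntropicPair) {ι : Type*} [Fintype ι] (p : ι → ℝ) : ℝ :=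
  e.h (∑ k, e.phi (p k))

/-- The minimal `(h,φ)`-entropy among probability vectors with maximal component `P`. -/
noncomputable def EntropicPair.Hmin (e : EntropicPair) (P : ℝ) : ℝ :=
  e.h ((⌊1 / P⌋₊ : ℝ) * e.phi P + e.phi (1 - (⌊1 / P⌋₊ : ℝ) * P))

/-- `D_{(h,φ)}(θ) = h(⌊1/cos²θ⌋ φ(cos²θ) + φ(1 − ⌊1/cos²θ⌋ cos²θ))`. -/
noncomputable def EntropicPair.D (e : EntropicPair) (θ : ℝ) : ℝ :=
  e.Hmin (Real.cos θ ^ 2)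

/-- A density operator: positive semidefinite with unit trace. -/
def IsDensityOp {N : ℕ} (ρ : Matrix (Fin N) (Fin N) ℂ) : Prop :=
  ρ.PosSemidef ∧ ρ.trace = 1

/-- The overlap `c = max_{i,j} |⟨b_j|a_i⟩|` between two orthonormal bases. -/
noncomputable def basisOverlap {N : ℕ}
    (a b : OrthonormalBasis (Fin N) ℂ (EuclideanSpace ℂ (Fin N))) : ℝ :=
  ⨆ i, ⨆ j, ‖(inner ℂ (b j) (a i) : ℂ)‖

/-- Outcome probabilities `p_i(A,ρ) = ⟨a_i|ρ|a_i⟩` for the nondegenerate observable with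
eigenbasis `a`. -/
noncomputable def basisProb {N : ℕ}
    (a : OrthonormalBasis (Fin N) ℂ (EuclideanSpace ℂ (Fin N)))
    (ρ : Matrix (Fin N) (Fin N) ℂ) : Fin N → ℝ :=
  fun i => ((inner ℂ (a i) ((Matrix.toEuclideanCLM (𝕜 := ℂ) ρ) (a i)) : ℂ)).re

/-! ### Auxiliary material for the proof -/

open Set Finset Matrix

set_option maxHeartbeats 1000000

section ConcaveAux

/-- Two-point Karamata inequality for a concave function. -/
lemma aux_two_point {φ : ℝ → ℝ} (hφ : ConcaveOn ℝ (Icc 0 1) φ)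
    {a b x y : ℝ} (hb : 0 ≤ b) (ha : a ≤ 1) (hbx : b ≤ x) (hxa : x ≤ a)
    (hby : b ≤ y) (hya : y ≤ a) (hsum : x + y = a + b) :
    φ a + φ b ≤ φ x + φ y := by
  rcases eq_or_lt_of_le (hbx.trans hxa : b ≤ a) with h | h
  · have hx : x = a := le_antisymm hxa (h ▸ hbx)
    have hy : y = b := by linarith
    rw [hx, hy]
  · set t : ℝ := (x - b) / (a - b) with ht
    have hab : (0:ℝ) < a - b := by linarith
    have ht0 : 0 ≤ t := div_nonneg (by linarith) hab.le
    have ht1 : t ≤ 1 := (div_le_one hab).2 (by linarith)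
    have hma : a ∈ Icc (0:ℝ) 1 := ⟨by linarith, ha⟩
    have hmb : b ∈ Icc (0:ℝ) 1 := ⟨hb, by linarith⟩
    have ht1' : (0:ℝ) ≤ 1 - t := by linarith
    have hx' : x = t * a + (1 - t) * b := by
      have h' : t * (a - b) = x - b := div_mul_cancel₀ _ hab.ne'
      linarith
    have hy' : y = (1 - t) * a + t * b := by
      have : y = a + b - x := by linarith
      rw [this, hx']; ring
    have h1 : t • φ a + (1-t) • φ b ≤ φ (t • a + (1-t) • b) :=
      hφ.2 hma hmb ht0 ht1' (by ring)
    have h2 : (1-t) • φ a + t • φ b ≤ φ ((1-t) • a + t • b) :=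
      hφ.2 hma hmb ht1' ht0 (by ring)
    simp only [smul_eq_mul] at h1 h2
    rw [hx', hy']
    nlinarith [h1, h2]

lemma aux_floor (P s : ℝ) (hP : 0 < P) (hs : 0 ≤ s) :
    (⌊s / P⌋₊ : ℝ) * P ≤ s ∧ s - (⌊s / P⌋₊ : ℝ) * P < P := by
  constructor
  · rw [← le_div_iff₀ hP]; exact Nat.floor_le (div_nonneg hs hP.le)
  · have h2 : s / P < (⌊s / P⌋₊ : ℝ) + 1 := Nat.lt_floor_add_one (s / P)
    nlinarith [(div_lt_iff₀ hP).1 h2]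

/-- The Schur-type lower bound for sums of a concave function over subprobability vectors
with entries bounded by `P`. -/
lemma aux_sum_phi_ge {φ : ℝ → ℝ} (hφ : ConcaveOn ℝ (Icc 0 1) φ) (h0 : φ 0 = 0)
    {P : ℝ} (hP : 0 < P) (hP1 : P ≤ 1) {ι : Type*} (s : Finset ι) (p : ι → ℝ)
    (hp0 : ∀ i ∈ s, 0 ≤ p i) (hpP : ∀ i ∈ s, p i ≤ P) (hps : ∑ i ∈ s, p i ≤ 1) :
    (⌊(∑ i ∈ s, p i) / P⌋₊ : ℝ) * φ P + φ ((∑ i ∈ s, p i) - ⌊(∑ i ∈ s, p i) / P⌋₊ * P)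
      ≤ ∑ i ∈ s, φ (p i) := by
  classical
  induction s using Finset.induction_on with
  | empty => simp [h0]
  | @insert a s' ha ih =>
    have hx0 : 0 ≤ p a := hp0 a (mem_insert_self a s')
    have hxP : p a ≤ P := hpP a (mem_insert_self a s')
    have hp0' : ∀ i ∈ s', 0 ≤ p i := fun i hi => hp0 i (mem_insert_of_mem hi)
    have hpP' : ∀ i ∈ s', p i ≤ P := fun i hi => hpP i (mem_insert_of_mem hi)
    rw [Finset.sum_insert ha, Finset.sum_insert ha]
    set t := ∑ i ∈ s', p i with htdef
    have ht0 : 0 ≤ t := Finset.sum_nonneg hp0'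
    have hts : p a + t ≤ 1 := by rwa [Finset.sum_insert ha] at hps
    have ih' := ih hp0' hpP' (by linarith)
    set n := ⌊t / P⌋₊ with hn
    obtain ⟨hnP, hrP⟩ := aux_floor P t hP ht0
    rw [← hn] at hnP hrP
    set r := t - (n : ℝ) * P with hr
    have hr0 : 0 ≤ r := by simp only [hr]; linarith
    have hrP' : r < P := hrP
    set x := p a with hx
    have hxr1 : x + r ≤ 1 := by
      have : r ≤ t := by
        simp only [hr]; nlinarith [(Nat.cast_nonneg n : (0:ℝ) ≤ n), hP.le]
      linarith
    rcases lt_or_ge (x + r) P with hcase | hcase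
    · have hfl : ⌊(x + t) / P⌋₊ = n := by
        rw [Nat.floor_eq_iff (by positivity)]
        refine ⟨by rw [le_div_iff₀ hP]; simp only [hr] at *; nlinarith,
          by rw [div_lt_iff₀ hP]; push_cast; simp only [hr] at *; nlinarith⟩
      rw [hfl]
      have key : φ (x + r) + φ 0 ≤ φ x + φ r :=
        aux_two_point hφ le_rfl hxr1 hx0 (by linarith) hr0 (by linarith) (by ring)
      rw [h0] at key
      have harg : x + t - (n:ℝ) * P = x + r := by simp only [hr]; ring
      rw [harg]
      linarith
    · have hfl : ⌊(x + t) / P⌋₊ = n + 1 := by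
        rw [Nat.floor_eq_iff (by positivity)]
        push_cast
        refine ⟨by rw [le_div_iff₀ hP]; simp only [hr] at *; nlinarith,
          by rw [div_lt_iff₀ hP]; simp only [hr] at *; nlinarith⟩
      rw [hfl]
      have key : φ P + φ (x + r - P) ≤ φ x + φ r :=
        aux_two_point hφ (by linarith) hP1 (by linarith) hxP (by linarith) hrP'.le (by ring)
      have harg : x + t - ((n:ℝ) + 1) * P = x + r - P := by simp only [hr]; ring
      push_cast
      rw [harg]
      linarith

end ConcaveAux

section EntropicAux

/-- The minimal entropy bound: `Hmin P` bounds the entropy of any probability vector with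
entries at most `P` from below. -/
lemma EntropicPair.Hmin_le_H (e : EntropicPair) {ι : Type*} [Fintype ι] {p : ι → ℝ}
    {P : ℝ} (hP : 0 < P) (hP1 : P ≤ 1) (hp0 : ∀ i, 0 ≤ p i) (hpP : ∀ i, p i ≤ P)
    (hsum : ∑ i, p i = 1) : e.Hmin P ≤ e.H p := by
  rcases e.admissible with ⟨hφ, hh⟩ | ⟨hφ, hh⟩
  · have := aux_sum_phi_ge hφ.concaveOn e.phi_zero hP hP1 Finset.univ p
      (fun i _ => hp0 i) (fun i _ => hpP i) (by rw [hsum])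
    rw [hsum] at this
    exact hh.monotone this
  · have := aux_sum_phi_ge (φ := fun x => -e.phi x) hφ.neg.concaveOn (by simp [e.phi_zero])
      hP hP1 Finset.univ p (fun i _ => hp0 i) (fun i _ => hpP i) (by rw [hsum])
    rw [hsum] at this
    have h2 : ∑ i, e.phi (p i) ≤ (⌊1/P⌋₊ : ℝ) * e.phi P + e.phi (1 - ⌊1/P⌋₊ * P) := by
      simp only [Finset.sum_neg_distrib] at this
      linarith
    exact hh.antitone h2

lemma EntropicPair.H_qvec (e : EntropicPair) {P : ℝ} :
    e.H (fun k : Fin (⌊1/P⌋₊ + 1) => if (k : ℕ) < ⌊1/P⌋₊ then P else 1 - ⌊1/P⌋₊ * P)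
      = e.Hmin P := by
  unfold EntropicPair.H EntropicPair.Hmin
  congr 1
  rw [Fin.sum_univ_castSucc]
  simp only [Fin.coe_castSucc, Fin.val_last, lt_irrefl, if_neg (lt_irrefl _)]
  rw [Finset.sum_congr rfl (fun k _ => by rw [if_pos k.isLt])]
  simp [mul_comm]

lemma EntropicPair.Hmin_anti (e : EntropicPair) {P Q : ℝ} (hP : 0 < P) (hPQ : P ≤ Q)
    (hQ1 : Q ≤ 1) : e.Hmin Q ≤ e.Hmin P := by
  obtain ⟨hf1, hf2⟩ := aux_floor P 1 hP zero_le_one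
  rw [← e.H_qvec (P := P)]
  apply e.Hmin_le_H (hP.trans_le hPQ) hQ1
  · intro i
    split
    · exact hP.le
    · rw [one_div] at hf1 ⊢; linarith
  · intro i
    split
    · exact hPQ
    · rw [one_div] at hf2 ⊢; linarith
  · rw [Fin.sum_univ_castSucc]
    simp only [Fin.coe_castSucc, Fin.val_last, if_neg (lt_irrefl _)]
    rw [Finset.sum_congr rfl (fun k _ => by rw [if_pos k.isLt])]
    simp

lemma EntropicPair.Hmin_one (e : EntropicPair) : e.Hmin 1 = 0 := by
  unfold EntropicPair.Hmin
  simp [e.phi_zero, e.norm_zero]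

lemma EntropicPair.Hmin_nonneg (e : EntropicPair) {P : ℝ} (h0 : 0 ≤ P) (h1 : P ≤ 1) :
    0 ≤ e.Hmin P := by
  rcases eq_or_lt_of_le h0 with h | h
  · unfold EntropicPair.Hmin
    simp [← h, e.phi_zero, e.norm_zero]
  · rw [← e.Hmin_one]
    exact e.Hmin_anti h h1 le_rfl

lemma EntropicPair.D_mono (e : EntropicPair) {θ₁ θ₂ : ℝ} (h0 : 0 ≤ θ₁) (h12 : θ₁ ≤ θ₂)
    (h2 : θ₂ < Real.pi / 2) : e.D θ₁ ≤ e.D θ₂ := by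
  have hc2 : 0 < Real.cos θ₂ :=
    Real.cos_pos_of_mem_Ioo ⟨by linarith [Real.pi_pos], h2⟩
  have hcc : Real.cos θ₂ ≤ Real.cos θ₁ :=
    Real.cos_le_cos_of_nonneg_of_le_pi h0 (by linarith [Real.pi_pos]) h12
  have hc11 : Real.cos θ₁ ≤ 1 := Real.cos_le_one θ₁
  apply e.Hmin_anti (by positivity) (by nlinarith) (by nlinarith)

lemma EntropicPair.D_zero (e : EntropicPair) : e.D 0 = 0 := by
  unfold EntropicPair.D
  simp [e.Hmin_one]

end EntropicAux

section QuantumAux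

lemma aux_arccos_anti {x y : ℝ} (hxy : x ≤ y) : Real.arccos y ≤ Real.arccos x := by
  unfold Real.arccos
  have := Real.monotone_arcsin hxy
  linarith

lemma aux_trig_arccos {p q m : ℝ} (hp0 : 0 ≤ p) (hp1 : p ≤ 1) (hq0 : 0 ≤ q) (hq1 : q ≤ 1)
    (hm0 : 0 ≤ m) (hm1 : m ≤ 1)
    (key : Real.sqrt q ≤ m * Real.sqrt p + Real.sqrt (1-m^2) * Real.sqrt (1-p)) :
    Real.arccos m ≤ Real.arccos (Real.sqrt p) + Real.arccos (Real.sqrt q) := by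
  set α := Real.arccos (Real.sqrt p) with hα
  set β := Real.arccos (Real.sqrt q) with hβ
  set g := Real.arccos m with hg
  by_contra hcon
  push_neg at hcon
  have hβ0 : 0 ≤ β := Real.arccos_nonneg _
  have hα0 : 0 ≤ α := Real.arccos_nonneg _
  have hgπ : g ≤ Real.pi := Real.arccos_le_pi _
  have hcosα : Real.cos α = Real.sqrt p :=
    Real.cos_arccos (by linarith [Real.sqrt_nonneg p]) (Real.sqrt_le_one.mpr hp1)
  have hsinα : Real.sin α = Real.sqrt (1 - p) := by
    rw [hα, Real.sin_arccos, Real.sq_sqrt hp0]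
  have hcosβ : Real.cos β = Real.sqrt q :=
    Real.cos_arccos (by linarith [Real.sqrt_nonneg q]) (Real.sqrt_le_one.mpr hq1)
  have hcosg : Real.cos g = m := Real.cos_arccos (by linarith) hm1
  have hsing : Real.sin g = Real.sqrt (1 - m^2) := by
    rw [hg, Real.sin_arccos]
  have h1 : β < g - α := by linarith
  have h2 : Real.cos (g - α) < Real.cos β := by
    apply Real.strictAntiOn_cos ⟨hβ0, by linarith⟩ ⟨by linarith, by linarith⟩ h1
  rw [Real.cos_sub, hcosg, hcosα, hsing, hsinα, hcosβ] at h2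
  linarith

lemma aux_norm_proj_sub {E : Type*} [NormedAddCommGroup E] [InnerProductSpace ℂ E]
    (x y : E) (hy : ‖y‖ = 1) :
    ‖x - (inner ℂ y x : ℂ) • y‖^2 = ‖x‖^2 - ‖(inner ℂ y x : ℂ)‖^2 := by
  rw [@norm_sub_sq ℂ, norm_smul, hy, mul_one, inner_smul_right, ← inner_conj_symm x y]
  rw [RCLike.mul_conj]
  norm_num
  rw [show ((‖inner ℂ y x‖ : ℂ)^2).re = ‖inner ℂ y x‖^2 by
    norm_cast]
  ring

lemma aux_wnorm_sq {N : ℕ} (lam : Fin N → ℝ) (hlam : ∀ k, 0 ≤ lam k) (z : Fin N → ℂ) :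
    ‖((WithLp.equiv 2 (Fin N → ℂ)).symm (fun k => ((Real.sqrt (lam k) : ℝ) : ℂ) * z k))‖^2
      = ∑ k, lam k * ‖z k‖^2 := by
  rw [EuclideanSpace.norm_eq, Real.sq_sqrt (by positivity)]
  refine Finset.sum_congr rfl (fun k _ => ?_)
  simp only [WithLp.equiv_symm_apply, PiLp.toLp_apply]
  rw [norm_mul, Complex.norm_real, Real.norm_eq_abs, abs_of_nonneg (Real.sqrt_nonneg _),
    mul_pow, Real.sq_sqrt (hlam k)]

lemma aux_parseval {N : ℕ} {v : OrthonormalBasis (Fin N) ℂ (EuclideanSpace ℂ (Fin N))}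
    (x : EuclideanSpace ℂ (Fin N)) :
    ∑ k, ‖(inner ℂ (v k) x : ℂ)‖^2 = ‖x‖^2 := by
  have h1 : ‖v.repr x‖^2 = ‖x‖^2 := by rw [v.repr.norm_map]
  rw [← h1, EuclideanSpace.norm_eq]
  rw [Real.sq_sqrt (by positivity)]
  exact Finset.sum_congr rfl (fun k _ => by rw [v.repr_apply_apply])

lemma aux_clm_eigen {N : ℕ} (ρ : Matrix (Fin N) (Fin N) ℂ) (hH : ρ.IsHermitian) (k : Fin N) :
    (Matrix.toEuclideanCLM (𝕜 := ℂ) ρ) (hH.eigenvectorBasis k)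
      = (hH.eigenvalues k : ℂ) • hH.eigenvectorBasis k := by
  have h := hH.mulVec_eigenvectorBasis k
  apply (WithLp.equiv 2 _).injective
  rw [WithLp.equiv_apply, WithLp.equiv_apply, Matrix.ofLp_toEuclideanCLM]
  ext j
  have := congrFun h j
  simpa using this

lemma aux_quad_form {N : ℕ} (ρ : Matrix (Fin N) (Fin N) ℂ) (hH : ρ.IsHermitian)
    (x : EuclideanSpace ℂ (Fin N)) :
    (inner ℂ x ((Matrix.toEuclideanCLM (𝕜 := ℂ) ρ) x) : ℂ)
      = ∑ k, (hH.eigenvalues k : ℂ) * (‖(inner ℂ (hH.eigenvectorBasis k) x : ℂ)‖^2 : ℝ) := by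
  set T := Matrix.toEuclideanCLM (𝕜 := ℂ) ρ with hT
  set v := hH.eigenvectorBasis with hv
  have hTx : T x = ∑ k, ((inner ℂ (v k) x : ℂ) * (hH.eigenvalues k : ℂ)) • v k := by
    conv_lhs => rw [← v.sum_repr' x, map_sum]
    refine Finset.sum_congr rfl (fun k _ => ?_)
    rw [ContinuousLinearMap.map_smul, hT, aux_clm_eigen ρ hH k, smul_smul]
  rw [hTx, inner_sum]
  refine Finset.sum_congr rfl (fun k _ => ?_)
  rw [inner_smul_right, ← inner_conj_symm x (v k)]
  have : ∀ z : ℂ, z * (starRingEnd ℂ) z = ((‖z‖^2 : ℝ) : ℂ) := by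
    intro z
    rw [Complex.mul_conj]
    norm_cast
    rw [← Complex.sq_norm]
  rw [mul_comm ((inner ℂ (v k) x : ℂ)) _, mul_assoc, this]

lemma aux_quad_form_re {N : ℕ} (ρ : Matrix (Fin N) (Fin N) ℂ) (hH : ρ.IsHermitian)
    (x : EuclideanSpace ℂ (Fin N)) :
    (inner ℂ x ((Matrix.toEuclideanCLM (𝕜 := ℂ) ρ) x) : ℂ).re
      = ∑ k, hH.eigenvalues k * ‖(inner ℂ (hH.eigenvectorBasis k) x : ℂ)‖^2 := by
  rw [aux_quad_form ρ hH x]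
  rw [Complex.re_sum]
  refine Finset.sum_congr rfl (fun k _ => ?_)
  rw [← Complex.ofReal_mul]
  exact Complex.ofReal_re _

lemma aux_eigen_sum {N : ℕ} (ρ : Matrix (Fin N) (Fin N) ℂ) (hH : ρ.IsHermitian) :
    (∑ k, (hH.eigenvalues k : ℂ)) = ρ.trace := by
  exact hH.trace_eq_sum_eigenvalues.symm

lemma aux_key_ineq {N : ℕ} (lam : Fin N → ℝ) (hlam0 : ∀ k, 0 ≤ lam k)
    (hlam1 : ∑ k, lam k = 1)
    (v : OrthonormalBasis (Fin N) ℂ (EuclideanSpace ℂ (Fin N)))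
    (u w : EuclideanSpace ℂ (Fin N)) (hu : ‖u‖ = 1) (hw : ‖w‖ = 1) :
    Real.sqrt (∑ k, lam k * ‖(inner ℂ (v k) w : ℂ)‖^2)
      ≤ ‖(inner ℂ u w : ℂ)‖ * Real.sqrt (∑ k, lam k * ‖(inner ℂ (v k) u : ℂ)‖^2)
        + Real.sqrt (1 - ‖(inner ℂ u w : ℂ)‖^2)
          * Real.sqrt (1 - ∑ k, lam k * ‖(inner ℂ (v k) u : ℂ)‖^2) := by
  set m : ℝ := ‖(inner ℂ u w : ℂ)‖ with hm
  set p : ℝ := ∑ k, lam k * ‖(inner ℂ (v k) u : ℂ)‖^2 with hp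
  set wp : EuclideanSpace ℂ (Fin N) := w - (inner ℂ u w : ℂ) • u with hwp
  have huu : (inner ℂ u u : ℂ) = 1 := by
    rw [inner_self_eq_norm_sq_to_K, hu]; norm_num
  have hortho : (inner ℂ u wp : ℂ) = 0 := by
    rw [hwp, inner_sub_right, inner_smul_right, huu, mul_one, sub_self]
  have hm0 : 0 ≤ m := norm_nonneg _
  have hm1 : m ≤ 1 := by
    calc m ≤ ‖u‖ * ‖w‖ := norm_inner_le_norm u w
    _ = 1 := by rw [hu, hw, mul_one]
  have hnwp : ‖wp‖^2 = 1 - m^2 := by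
    rw [hwp, aux_norm_proj_sub w u hu, hw, ← hm]; ring
  have hdecomp : w = (inner ℂ u w : ℂ) • u + wp := by rw [hwp]; abel
  have hk : ∀ k, ‖(inner ℂ (v k) wp : ℂ)‖^2 ≤ (1 - ‖(inner ℂ (v k) u : ℂ)‖^2) * ‖wp‖^2 := by
    intro k
    set c : ℂ := inner ℂ u (v k) with hc
    have heq : (inner ℂ (v k) wp : ℂ) = inner ℂ ((v k) - c • u) wp := by
      rw [inner_sub_left, inner_smul_left, hortho, mul_zero, sub_zero]
    have hcs : ‖(inner ℂ ((v k) - c • u) wp : ℂ)‖ ≤ ‖(v k) - c • u‖ * ‖wp‖ :=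
      norm_inner_le_norm _ _
    have hnv : ‖(v k) - c • u‖^2 = 1 - ‖(inner ℂ (v k) u : ℂ)‖^2 := by
      rw [hc, aux_norm_proj_sub (v k) u hu, v.orthonormal.1 k, norm_inner_symm]
      norm_num
    calc ‖(inner ℂ (v k) wp : ℂ)‖^2 = ‖(inner ℂ ((v k) - c • u) wp : ℂ)‖^2 := by rw [heq]
    _ ≤ (‖(v k) - c • u‖ * ‖wp‖)^2 := by
        apply pow_le_pow_left₀ (norm_nonneg _) hcs
    _ = (1 - ‖(inner ℂ (v k) u : ℂ)‖^2) * ‖wp‖^2 := by rw [mul_pow, hnv]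
  set X : EuclideanSpace ℂ (Fin N) := (WithLp.equiv 2 (Fin N → ℂ)).symm
    (fun k => ((Real.sqrt (lam k) : ℝ) : ℂ) * (inner ℂ (v k) w : ℂ)) with hX
  set U : EuclideanSpace ℂ (Fin N) := (WithLp.equiv 2 (Fin N → ℂ)).symm
    (fun k => ((Real.sqrt (lam k) : ℝ) : ℂ) * (inner ℂ (v k) u : ℂ)) with hU
  set Wp : EuclideanSpace ℂ (Fin N) := (WithLp.equiv 2 (Fin N → ℂ)).symm
    (fun k => ((Real.sqrt (lam k) : ℝ) : ℂ) * (inner ℂ (v k) wp : ℂ)) with hWp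
  have hXdec : X = (inner ℂ u w : ℂ) • U + Wp := by
    rw [hX, hU, hWp]
    apply (WithLp.equiv 2 (Fin N → ℂ)).injective
    ext k
    simp only [WithLp.equiv_symm_apply, Equiv.apply_symm_apply, WithLp.equiv_apply, PiLp.toLp_apply,
      PiLp.add_apply, PiLp.smul_apply, smul_eq_mul]
    have h3 : (inner ℂ (v k) w : ℂ)
        = (inner ℂ u w : ℂ) * (inner ℂ (v k) u : ℂ) + (inner ℂ (v k) wp : ℂ) := by
      conv_lhs => rw [hdecomp]
      rw [inner_add_right, inner_smul_right]
    rw [h3]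
    ring
  have hnX : ‖X‖^2 = ∑ k, lam k * ‖(inner ℂ (v k) w : ℂ)‖^2 := aux_wnorm_sq lam hlam0 _
  have hnU : ‖U‖^2 = p := aux_wnorm_sq lam hlam0 _
  have hnWp2 : ‖Wp‖^2 ≤ (1 - p) * ‖wp‖^2 := by
    rw [hWp, aux_wnorm_sq lam hlam0]
    have e1 : (1 - p) * ‖wp‖^2 = ∑ k, lam k * ((1 - ‖(inner ℂ (v k) u : ℂ)‖^2) * ‖wp‖^2) := by
      have e2 : (1 - p) = ∑ k, (lam k - lam k * ‖(inner ℂ (v k) u : ℂ)‖^2) := by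
        rw [Finset.sum_sub_distrib, hlam1, hp]
      rw [e2, Finset.sum_mul]
      exact Finset.sum_congr rfl (fun k _ => by ring)
    rw [e1]
    exact Finset.sum_le_sum (fun k _ => by
      have h4 := hk k
      have h5 := hlam0 k
      nlinarith [sq_nonneg ‖(inner ℂ (v k) wp : ℂ)‖])
  have hp0 : 0 ≤ p :=
    Finset.sum_nonneg (fun k _ => mul_nonneg (hlam0 k) (sq_nonneg _))
  have hp1 : p ≤ 1 := by
    rw [hp, ← hlam1]
    apply Finset.sum_le_sum (fun k _ => ?_)
    have h1 : ‖(inner ℂ (v k) u : ℂ)‖ ≤ 1 := by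
      calc ‖(inner ℂ (v k) u : ℂ)‖ ≤ ‖v k‖ * ‖u‖ := norm_inner_le_norm _ _
      _ = 1 := by rw [v.orthonormal.1 k, hu, mul_one]
    have h2 : ‖(inner ℂ (v k) u : ℂ)‖^2 ≤ 1 := by nlinarith [norm_nonneg (inner ℂ (v k) u : ℂ)]
    calc lam k * ‖(inner ℂ (v k) u : ℂ)‖^2 ≤ lam k * 1 := mul_le_mul_of_nonneg_left h2 (hlam0 k)
    _ = lam k := mul_one _
  have htri : ‖X‖ ≤ m * ‖U‖ + ‖Wp‖ := by
    rw [hXdec]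
    calc ‖(inner ℂ u w : ℂ) • U + Wp‖ ≤ ‖(inner ℂ u w : ℂ) • U‖ + ‖Wp‖ := norm_add_le _ _
    _ = m * ‖U‖ + ‖Wp‖ := by rw [norm_smul]
  have hXv : Real.sqrt (∑ k, lam k * ‖(inner ℂ (v k) w : ℂ)‖^2) = ‖X‖ := by
    rw [← hnX, Real.sqrt_sq (norm_nonneg _)]
  have hUv : Real.sqrt p = ‖U‖ := by rw [← hnU, Real.sqrt_sq (norm_nonneg _)]
  have hWpv : ‖Wp‖ ≤ Real.sqrt (1 - m^2) * Real.sqrt (1 - p) := by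
    have h1 : ‖Wp‖^2 ≤ (1 - m^2) * (1 - p) := by
      rw [hnwp] at hnWp2; nlinarith [hnWp2]
    have h2 : (0:ℝ) ≤ 1 - m^2 := by nlinarith
    calc ‖Wp‖ = Real.sqrt (‖Wp‖^2) := (Real.sqrt_sq (norm_nonneg _)).symm
    _ ≤ Real.sqrt ((1 - m^2) * (1 - p)) := Real.sqrt_le_sqrt h1
    _ = Real.sqrt (1 - m^2) * Real.sqrt (1 - p) := Real.sqrt_mul h2 _
  rw [hXv, hUv]
  calc ‖X‖ ≤ m * ‖U‖ + ‖Wp‖ := htri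
  _ ≤ m * ‖U‖ + Real.sqrt (1 - m^2) * Real.sqrt (1 - p) := by
      have := mul_nonneg hm0 (norm_nonneg U)
      linarith

lemma aux_sum_lam_le_one {N : ℕ} (lam : Fin N → ℝ) (hlam0 : ∀ k, 0 ≤ lam k)
    (hlam1 : ∑ k, lam k = 1)
    (v : OrthonormalBasis (Fin N) ℂ (EuclideanSpace ℂ (Fin N)))
    (x : EuclideanSpace ℂ (Fin N)) (hx : ‖x‖ = 1) :
    ∑ k, lam k * ‖(inner ℂ (v k) x : ℂ)‖^2 ≤ 1 := by
  rw [← hlam1]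
  apply Finset.sum_le_sum (fun k _ => ?_)
  have h1 : ‖(inner ℂ (v k) x : ℂ)‖ ≤ 1 := by
    calc ‖(inner ℂ (v k) x : ℂ)‖ ≤ ‖v k‖ * ‖x‖ := norm_inner_le_norm _ _
    _ = 1 := by rw [v.orthonormal.1 k, hx, mul_one]
  have h2 : ‖(inner ℂ (v k) x : ℂ)‖^2 ≤ 1 := by nlinarith [norm_nonneg (inner ℂ (v k) x : ℂ)]
  calc lam k * ‖(inner ℂ (v k) x : ℂ)‖^2 ≤ lam k * 1 := mul_le_mul_of_nonneg_left h2 (hlam0 k)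
  _ = lam k := mul_one _

/-- Landau–Pollak-type inequality for a density operator and two unit vectors. -/
lemma aux_LP {N : ℕ} (ρ : Matrix (Fin N) (Fin N) ℂ) (hρ : IsDensityOp ρ)
    (u w : EuclideanSpace ℂ (Fin N)) (hu : ‖u‖ = 1) (hw : ‖w‖ = 1) :
    Real.arccos ‖(inner ℂ u w : ℂ)‖
      ≤ Real.arccos (Real.sqrt ((inner ℂ u ((Matrix.toEuclideanCLM (𝕜 := ℂ) ρ) u) : ℂ).re))
        + Real.arccos (Real.sqrt ((inner ℂ w ((Matrix.toEuclideanCLM (𝕜 := ℂ) ρ) w) : ℂ).re)) := by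
  have hH : ρ.IsHermitian := hρ.1.1
  set lam := hH.eigenvalues with hlam
  set v := hH.eigenvectorBasis with hv
  have hlam0 : ∀ k, 0 ≤ lam k := fun k => hρ.1.eigenvalues_nonneg k
  have hlam1 : ∑ k, lam k = 1 := by
    have h1 := aux_eigen_sum ρ hH
    rw [hρ.2] at h1
    exact_mod_cast h1
  rw [aux_quad_form_re ρ hH u, aux_quad_form_re ρ hH w]
  have hp0 : 0 ≤ ∑ k, lam k * ‖(inner ℂ (v k) u : ℂ)‖^2 :=
    Finset.sum_nonneg (fun k _ => mul_nonneg (hlam0 k) (sq_nonneg _))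
  have hq0 : 0 ≤ ∑ k, lam k * ‖(inner ℂ (v k) w : ℂ)‖^2 :=
    Finset.sum_nonneg (fun k _ => mul_nonneg (hlam0 k) (sq_nonneg _))
  exact aux_trig_arccos hp0 (aux_sum_lam_le_one lam hlam0 hlam1 v u hu)
    hq0 (aux_sum_lam_le_one lam hlam0 hlam1 v w hw)
    (norm_nonneg _)
    (by calc ‖(inner ℂ u w : ℂ)‖ ≤ ‖u‖ * ‖w‖ := norm_inner_le_norm u w
        _ = 1 := by rw [hu, hw, mul_one])
    (aux_key_ineq lam hlam0 hlam1 v u w hu hw)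

lemma basisProb_nonneg {N : ℕ}
    (a : OrthonormalBasis (Fin N) ℂ (EuclideanSpace ℂ (Fin N)))
    (ρ : Matrix (Fin N) (Fin N) ℂ) (hρ : IsDensityOp ρ) (i : Fin N) :
    0 ≤ basisProb a ρ i := by
  rw [basisProb, aux_quad_form_re ρ hρ.1.1]
  exact Finset.sum_nonneg (fun k _ =>
    mul_nonneg (hρ.1.eigenvalues_nonneg k) (sq_nonneg _))

lemma basisProb_sum {N : ℕ}
    (a : OrthonormalBasis (Fin N) ℂ (EuclideanSpace ℂ (Fin N)))
    (ρ : Matrix (Fin N) (Fin N) ℂ) (hρ : IsDensityOp ρ) :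
    ∑ i, basisProb a ρ i = 1 := by
  have hH : ρ.IsHermitian := hρ.1.1
  have h1 : ∀ i, basisProb a ρ i
      = ∑ k, hH.eigenvalues k * ‖(inner ℂ (hH.eigenvectorBasis k) (a i) : ℂ)‖^2 :=
    fun i => aux_quad_form_re ρ hH (a i)
  rw [Finset.sum_congr rfl (fun i _ => h1 i), Finset.sum_comm]
  have h2 : ∀ k, ∑ i, hH.eigenvalues k * ‖(inner ℂ (hH.eigenvectorBasis k) (a i) : ℂ)‖^2
      = hH.eigenvalues k := by
    intro k
    rw [← Finset.mul_sum]
    have h3 : ∑ i, ‖(inner ℂ (hH.eigenvectorBasis k) (a i) : ℂ)‖^2 = 1 := by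
      rw [Finset.sum_congr rfl (fun i _ => by
        rw [show ‖(inner ℂ (hH.eigenvectorBasis k) (a i) : ℂ)‖
              = ‖(inner ℂ (a i) (hH.eigenvectorBasis k) : ℂ)‖ from norm_inner_symm _ _])]
      rw [aux_parseval (v := a), hH.eigenvectorBasis.orthonormal.1 k, one_pow]
    rw [h3, mul_one]
  rw [Finset.sum_congr rfl (fun k _ => h2 k)]
  have h4 := aux_eigen_sum ρ hH
  rw [hρ.2] at h4
  exact_mod_cast h4

end QuantumAux

/-- For nondegenerate observables with eigenbases `a`, `b` of overlap `c`,
the entropy sum is bounded below by `min_{θ ∈ [0,γ]} (D_A(θ) + D_B(γ−θ))`, `γ = arccos c`. -/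
theorem entropic_uncertainty_relation_nondegenerate
    {N : ℕ} (hN : 0 < N)
    (a b : OrthonormalBasis (Fin N) ℂ (EuclideanSpace ℂ (Fin N)))
    (ρ : Matrix (Fin N) (Fin N) ℂ) (hρ : IsDensityOp ρ)
    (eA eB : EntropicPair)
    (c γ : ℝ) (hc : c = basisOverlap a b) (hγ : γ = Real.arccos c) :
    eA.H (basisProb a ρ) + eB.H (basisProb b ρ) ≥
      sInf ((fun θ => eA.D θ + eB.D (γ - θ)) '' Set.Icc 0 γ) := by
  haveI : NeZero N := ⟨hN.ne'⟩
  set pA := basisProb a ρ with hpA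
  set pB := basisProb b ρ with hpB
  obtain ⟨I, -, hI⟩ := Finset.exists_max_image Finset.univ pA ⟨⟨0, hN⟩, Finset.mem_univ _⟩
  obtain ⟨J, -, hJ⟩ := Finset.exists_max_image Finset.univ pB ⟨⟨0, hN⟩, Finset.mem_univ _⟩
  have hI' : ∀ i, pA i ≤ pA I := fun i => hI i (Finset.mem_univ i)
  have hJ' : ∀ j, pB j ≤ pB J := fun j => hJ j (Finset.mem_univ j)
  set PA := pA I with hPA
  set PB := pB J with hPB
  have hsumA := basisProb_sum a ρ hρ
  have hsumB := basisProb_sum b ρ hρ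
  have hA0 : ∀ i, 0 ≤ pA i := basisProb_nonneg a ρ hρ
  have hB0 : ∀ j, 0 ≤ pB j := basisProb_nonneg b ρ hρ
  have hPA1 : PA ≤ 1 := by
    rw [← hsumA]
    exact Finset.single_le_sum (fun i _ => hA0 i) (Finset.mem_univ I)
  have hPB1 : PB ≤ 1 := by
    rw [← hsumB]
    exact Finset.single_le_sum (fun j _ => hB0 j) (Finset.mem_univ J)
  have hPA0 : 0 < PA := by
    by_contra hcon
    push_neg at hcon
    have : ∑ i, pA i ≤ 0 := Finset.sum_nonpos (fun i _ => (hI' i).trans hcon)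
    rw [hsumA] at this; linarith
  have hPB0 : 0 < PB := by
    by_contra hcon
    push_neg at hcon
    have : ∑ j, pB j ≤ 0 := Finset.sum_nonpos (fun j _ => (hJ' j).trans hcon)
    rw [hsumB] at this; linarith
  set θA := Real.arccos (Real.sqrt PA) with hθA
  set θB := Real.arccos (Real.sqrt PB) with hθB
  have hθA0 : 0 ≤ θA := Real.arccos_nonneg _
  have hθB0 : 0 ≤ θB := Real.arccos_nonneg _
  have hθAlt : θA < Real.pi / 2 :=
    Real.arccos_lt_pi_div_two.mpr (Real.sqrt_pos.mpr hPA0)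
  have hθBlt : θB < Real.pi / 2 :=
    Real.arccos_lt_pi_div_two.mpr (Real.sqrt_pos.mpr hPB0)
  have hcosA : Real.cos θA ^ 2 = PA := by
    rw [hθA, Real.cos_arccos (by linarith [Real.sqrt_nonneg PA]) (Real.sqrt_le_one.mpr hPA1),
      Real.sq_sqrt hPA0.le]
  have hcosB : Real.cos θB ^ 2 = PB := by
    rw [hθB, Real.cos_arccos (by linarith [Real.sqrt_nonneg PB]) (Real.sqrt_le_one.mpr hPB1),
      Real.sq_sqrt hPB0.le]
  have hDA : eA.D θA = eA.Hmin PA := by rw [EntropicPair.D, hcosA]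
  have hDB : eB.D θB = eB.Hmin PB := by rw [EntropicPair.D, hcosB]
  have hHA : eA.Hmin PA ≤ eA.H pA := eA.Hmin_le_H hPA0 hPA1 hA0 hI' hsumA
  have hHB : eB.Hmin PB ≤ eB.H pB := eB.Hmin_le_H hPB0 hPB1 hB0 hJ' hsumB
  have hLP : γ ≤ θA + θB := by
    have h1 := aux_LP ρ hρ (a I) (b J) (a.orthonormal.1 I) (b.orthonormal.1 J)
    have hb1 : ‖(inner ℂ (b J) (a I) : ℂ)‖ ≤ ⨆ j, ‖(inner ℂ (b j) (a I) : ℂ)‖ :=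
      le_ciSup (f := fun j => ‖(inner ℂ (b j) (a I) : ℂ)‖)
        (Set.Finite.bddAbove (Set.finite_range _)) J
    have hb2 : (⨆ j, ‖(inner ℂ (b j) (a I) : ℂ)‖) ≤ ⨆ i, ⨆ j, ‖(inner ℂ (b j) (a i) : ℂ)‖ :=
      le_ciSup (f := fun i => ⨆ j, ‖(inner ℂ (b j) (a i) : ℂ)‖)
        (Set.Finite.bddAbove (Set.finite_range _)) I
    have hm : ‖(inner ℂ (a I) (b J) : ℂ)‖ ≤ c := by
      rw [hc, basisOverlap, norm_inner_symm]
      exact hb1.trans hb2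
    have h2 : γ ≤ Real.arccos ‖(inner ℂ (a I) (b J) : ℂ)‖ := by
      rw [hγ]; exact aux_arccos_anti hm
    exact h2.trans h1
  have hγ0 : 0 ≤ γ := hγ ▸ Real.arccos_nonneg c
  set θ := min θA γ with hθ
  have hθmem : θ ∈ Set.Icc 0 γ := ⟨le_min hθA0 hγ0, min_le_right _ _⟩
  have hbdd : BddBelow ((fun θ => eA.D θ + eB.D (γ - θ)) '' Set.Icc 0 γ) := by
    refine ⟨0, fun y hy => ?_⟩
    obtain ⟨θ', hθ', rfl⟩ := hy
    have h1 : 0 ≤ eA.D θ' := EntropicPair.Hmin_nonneg eA (sq_nonneg _)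
      (by nlinarith [Real.neg_one_le_cos θ', Real.cos_le_one θ'])
    have h2 : 0 ≤ eB.D (γ - θ') := EntropicPair.Hmin_nonneg eB (sq_nonneg _)
      (by nlinarith [Real.neg_one_le_cos (γ - θ'), Real.cos_le_one (γ - θ')])
    show (0:ℝ) ≤ eA.D θ' + eB.D (γ - θ')
    linarith
  have hmem : eA.D θ + eB.D (γ - θ) ∈ (fun θ => eA.D θ + eB.D (γ - θ)) '' Set.Icc 0 γ :=
    ⟨θ, hθmem, rfl⟩
  have hsInf := csInf_le hbdd hmem
  have hfA : eA.D θ ≤ eA.H pA := by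
    calc eA.D θ ≤ eA.D θA := eA.D_mono (le_min hθA0 hγ0) (min_le_left _ _) hθAlt
    _ = eA.Hmin PA := hDA
    _ ≤ eA.H pA := hHA
  have hfB : eB.D (γ - θ) ≤ eB.H pB := by
    rcases le_total γ θA with hcase | hcase
    · have : θ = γ := min_eq_right hcase
      rw [this, sub_self, eB.D_zero]
      calc (0:ℝ) ≤ eB.Hmin PB := EntropicPair.Hmin_nonneg eB hPB0.le hPB1
      _ ≤ eB.H pB := hHB
    · have hθeq : θ = θA := min_eq_left hcase
      calc eB.D (γ - θ) ≤ eB.D θB := by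
            rw [hθeq]
            exact eB.D_mono (by rw [hθeq] at hθmem; linarith [hθmem.2, hcase, hLP]; )
              (by linarith) hθBlt
      _ = eB.Hmin PB := hDB
      _ ≤ eB.H pB := hHB
  calc sInf ((fun θ => eA.D θ + eB.D (γ - θ)) '' Set.Icc 0 γ)
      ≤ eA.D θ + eB.D (γ - θ) := hsInf
  _ ≤ eA.H pA + eB.H pB := add_le_add hfA hfB
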